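/- Let G be a finite connected multigraph on n ≥ 2 vertices, let χ ≥ 1 be its minimum cut size, and suppose each edge of G independently becomes 'heavy' with probability p ∈ (0,1). Define η by p^χ = n^{−(2+η)} and assume η > 0. Then for every real α ≥ 1, the probability that there exists some compact cut C of G of size at least αχ such that every edge crossing C is heavy is at most 49·n^{−αη}. -/

import Mathlib

open MeasureTheory ProbabilityTheory Finset

/-- A multigraph on vertex type `V` with edge type `E` is given by a map
`ends : E → Sym2 V` assigning to each edge its unordered pair of endpoints.
`Crosses ends s e` says that the edge `e` crosses the cut (vertex partition)
described by the setoid `s`, i.e. its endpoints lie in different clusters. -/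
def Crosses {V E : Type*} (ends : E → Sym2 V) (s : Setoid V) (e : E) : Prop :=
  ∃ u v : V, ends e = s(u, v) ∧ ¬ s u v

/-- The size of the cut `s`: the number of crossing edges. -/
noncomputable def cutSize {V E : Type*} (ends : E → Sym2 V) (s : Setoid V) : ℕ :=
  Nat.card {e : E // Crosses ends s e}

/-- The vertex subset `S` is nonempty and connected in the multigraph `ends`,
using only edges with both endpoints in `S`. -/
def ConnectedOn {V E : Type*} (ends : E → Sym2 V) (S : Set V) : Prop :=
  S.Nonempty ∧ ∀ u ∈ S, ∀ v ∈ S,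
    Relation.ReflTransGen (fun a b => a ∈ S ∧ b ∈ S ∧ ∃ e, ends e = s(a, b)) u v

/-- `s` is a cut: its partition of the vertex set has at least two clusters. -/
def IsCut {V : Type*} (s : Setoid V) : Prop :=
  ∃ u v : V, ¬ s u v

/-- `s` is a compact cut of the multigraph `ends`: it is a cut and every cluster
induces a connected subgraph. -/
def IsCompactCut {V E : Type*} (ends : E → Sym2 V) (s : Setoid V) : Prop :=
  IsCut s ∧ ∀ v : V, ConnectedOn ends {u | s u v}

/-- The number of edges crossing the 2-way cut determined by the vertex subset `A`. -/
noncomputable def twoWaySize {V E : Type*} (ends : E → Sym2 V) (A : Set V) : ℕ :=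
  Nat.card {e : E // ∃ u v : V, ends e = s(u, v) ∧ u ∈ A ∧ v ∉ A}


namespace Karger

attribute [local instance] Classical.propDecidable

noncomputable section

instance finiteSetoid (W : Type*) [Finite W] : Finite (Setoid W) := by
  have : Function.Injective (fun s : Setoid W => (s.r : W → W → Prop)) := by
    intro a b h
    cases a; cases b; congr
  exact Finite.of_injective _ this

instance fintypeSetoid (W : Type*) [Finite W] : Fintype (Setoid W) := Fintype.ofFinite _

/-- Bell-type bound: `B r = ∑_{k ≤ r} k^r / k!`. -/
def B (r : ℕ) : ℝ := ∑ k ∈ range (r + 1), (k : ℝ) ^ r / (Nat.factorial k)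

lemma B_nonneg (r : ℕ) : 0 ≤ B r := by
  apply Finset.sum_nonneg
  intro k _
  positivity

lemma B_mono {c r : ℕ} (hc : 1 ≤ c) (hcr : c ≤ r) : B c ≤ B r := by
  unfold B
  calc ∑ k ∈ range (c + 1), (k : ℝ) ^ c / (Nat.factorial k)
      ≤ ∑ k ∈ range (c + 1), (k : ℝ) ^ r / (Nat.factorial k) := by
        apply Finset.sum_le_sum
        intro k _
        rcases Nat.eq_zero_or_pos k with h0 | h1
        · subst h0
          simp [zero_pow (by omega : c ≠ 0), zero_pow (by omega : r ≠ 0)]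
        · apply div_le_div_of_nonneg_right ?_ (by positivity) |>.trans_eq rfl
          exact pow_le_pow_right₀ (by exact_mod_cast h1) hcr
    _ ≤ ∑ k ∈ range (r + 1), (k : ℝ) ^ r / (Nat.factorial k) := by
        apply Finset.sum_le_sum_of_subset_of_nonneg
        · intro k hk; simp only [mem_range] at *; omega
        · intro k _ _; positivity


section counting

lemma card_setoid_fiber (W : Type*) [Fintype W] (k : ℕ) :
    Fintype.card {s : Setoid W // Nat.card (Quotient s) = k} * Nat.factorial k
      ≤ k ^ (Fintype.card W) := by
  classical
  have key : Function.Injective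
      (fun x : {s : Setoid W // Nat.card (Quotient s) = k} × Equiv.Perm (Fin k) =>
        (fun w : W => x.2 ((Fintype.equivFinOfCardEq
            (by rw [← Nat.card_eq_fintype_card]; exact x.1.2))
          (Quotient.mk x.1.1 w)))) := by
    intro x y h
    obtain ⟨⟨s, hs⟩, g⟩ := x
    obtain ⟨⟨s', hs'⟩, g'⟩ := y
    simp only at h
    have hfun := fun w => congrFun h w
    have hss : s = s' := by
      ext u v
      constructor
      · intro huv
        have h1 : Quotient.mk s u = Quotient.mk s v := Quotient.sound huv
        have h2 := hfun u
        have h3 := hfun v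
        rw [h1] at h2
        have h4 := g'.injective (h2.symm.trans h3)
        have h5 := (Fintype.equivFinOfCardEq
          (by rw [← Nat.card_eq_fintype_card]; exact hs')).injective h4
        exact Quotient.eq.mp h5
      · intro huv
        have h1 : Quotient.mk s' u = Quotient.mk s' v := Quotient.sound huv
        have h2 := hfun u
        have h3 := hfun v
        rw [h1] at h2
        have h4 := g.injective (h2.trans h3.symm)
        have h5 := (Fintype.equivFinOfCardEq
          (by rw [← Nat.card_eq_fintype_card]; exact hs)).injective h4
        exact Quotient.eq.mp h5
    subst hss
    have hpf : hs = hs' := rfl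
    subst hpf
    have hgg : g = g' := by
      apply Equiv.ext
      intro i
      obtain ⟨z, hz⟩ := (Fintype.equivFinOfCardEq (α := Quotient s)
        (by rw [← Nat.card_eq_fintype_card]; exact hs)).surjective i
      obtain ⟨w, hw⟩ := Quotient.exists_rep z
      rw [← hz, ← hw]
      exact hfun w
    rw [hgg]
  calc Fintype.card {s : Setoid W // Nat.card (Quotient s) = k} * Nat.factorial k
      = Fintype.card ({s : Setoid W // Nat.card (Quotient s) = k} × Equiv.Perm (Fin k)) := by
        simp [Fintype.card_prod, Fintype.card_perm, Fintype.card_fin]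
    _ ≤ Fintype.card (W → Fin k) := Fintype.card_le_of_injective _ key
    _ = k ^ Fintype.card W := by simp [Fintype.card_fun]

lemma card_setoid_le_B (W : Type*) [Fintype W] [Nonempty W] :
    (Fintype.card (Setoid W) : ℝ) ≤ B (Fintype.card W) := by
  classical
  set c := Fintype.card W with hc
  have hmaps : ∀ s : Setoid W, s ∈ (univ : Finset (Setoid W)) →
      Nat.card (Quotient s) ∈ range (c + 1) := by
    intro s _
    simp only [mem_range]
    have h1 : Nat.card (Quotient s) ≤ c := by
      rw [Nat.card_eq_fintype_card]
      exact Fintype.card_quotient_le s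
    omega
  have hcard := Finset.card_eq_sum_card_fiberwise hmaps
  rw [← Finset.card_univ, hcard]
  push_cast
  unfold B
  apply Finset.sum_le_sum
  intro k _
  rw [le_div_iff₀ (by positivity)]
  have h1 : ((univ : Finset (Setoid W)).filter
      (fun s => Nat.card (Quotient s) = k)).card
      = Fintype.card {s : Setoid W // Nat.card (Quotient s) = k} := (Fintype.card_subtype _).symm
  rw [h1]
  exact_mod_cast card_setoid_fiber W k

lemma exp_one_le_three : Real.exp 1 ≤ 3 :=
  (Real.exp_one_lt_d9.le.trans (by norm_num))

lemma sum_inv_factorial_le (m : ℕ) :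
    ∑ k ∈ range m, (1 : ℝ) / (Nat.factorial k) ≤ 3 := by
  have h := Real.sum_le_exp_of_nonneg (by norm_num : (0:ℝ) ≤ 1) m
  simp only [one_pow] at h
  exact h.trans exp_one_le_three

lemma card_setoid_le_pow (W : Type*) [Fintype W] [Nonempty W] :
    (Fintype.card (Setoid W) : ℝ)
      ≤ 3 * (Fintype.card W : ℝ) ^ (Fintype.card W) := by
  refine (card_setoid_le_B W).trans ?_
  set c := Fintype.card W with hc
  unfold B
  calc ∑ k ∈ range (c + 1), (k : ℝ) ^ c / (Nat.factorial k)
      ≤ ∑ k ∈ range (c + 1), (c : ℝ) ^ c * (1 / (Nat.factorial k)) := by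
        apply Finset.sum_le_sum
        intro k hk
        rw [mul_one_div]
        have hkc : (k : ℝ) ≤ (c : ℝ) := by
          exact_mod_cast Nat.lt_succ_iff.mp (mem_range.mp hk)
        gcongr
    _ = (c : ℝ) ^ c * ∑ k ∈ range (c + 1), (1 : ℝ) / (Nat.factorial k) := by
        rw [Finset.mul_sum]
    _ ≤ (c : ℝ) ^ c * 3 := by
        apply mul_le_mul_of_nonneg_left (sum_inv_factorial_le _) (by positivity)
    _ = 3 * (c : ℝ) ^ c := by ring

lemma sumB_le (n : ℕ) : ∑ r ∈ Icc 2 n, B r / (Nat.factorial r) ≤ 21 := by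
  have h1 : ∑ r ∈ Icc 2 n, B r / (Nat.factorial r)
      ≤ ∑ r ∈ range (n + 1), B r / (Nat.factorial r) := by
    apply Finset.sum_le_sum_of_subset_of_nonneg
    · intro r hr; simp only [mem_Icc, mem_range] at *; omega
    · intro r _ _
      have := B_nonneg r
      positivity
  refine h1.trans ?_
  have h2 : ∑ r ∈ range (n + 1), B r / (Nat.factorial r)
      ≤ ∑ r ∈ range (n + 1), ∑ k ∈ range (n + 1),
          (k : ℝ) ^ r / (Nat.factorial k) * (1 / (Nat.factorial r)) := by
    apply Finset.sum_le_sum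
    intro r hr
    rw [div_eq_mul_one_div]
    unfold B
    rw [Finset.sum_mul]
    apply Finset.sum_le_sum_of_subset_of_nonneg
    · intro k hk; simp only [mem_range] at *
      have := Nat.lt_succ_iff.mp hr; omega
    · intro k _ _; positivity
  refine h2.trans ?_
  rw [Finset.sum_comm]
  have h3 : ∀ k ∈ range (n + 1),
      ∑ r ∈ range (n + 1), (k : ℝ) ^ r / (Nat.factorial k) * (1 / (Nat.factorial r))
        ≤ Real.exp 1 ^ k / (Nat.factorial k) := by
    intro k _
    have : ∑ r ∈ range (n + 1), (k : ℝ) ^ r / (Nat.factorial k) * (1 / (Nat.factorial r))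
        = (1 / (Nat.factorial k)) * ∑ r ∈ range (n + 1), (k : ℝ) ^ r / (Nat.factorial r) := by
      rw [Finset.mul_sum]
      apply Finset.sum_congr rfl
      intro r _
      ring
    rw [this, Real.exp_one_pow,
      show Real.exp (k:ℝ) / (Nat.factorial k : ℝ)
        = 1 / (Nat.factorial k : ℝ) * Real.exp (k:ℝ) by ring]
    have hk0 : (0:ℝ) ≤ (k:ℝ) := Nat.cast_nonneg k
    have hfac : (0:ℝ) ≤ 1 / (Nat.factorial k : ℝ) := by positivity
    exact mul_le_mul_of_nonneg_left (Real.sum_le_exp_of_nonneg hk0 (n + 1)) hfac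
  calc ∑ k ∈ range (n + 1), ∑ r ∈ range (n + 1),
        (k : ℝ) ^ r / (Nat.factorial k) * (1 / (Nat.factorial r))
      ≤ ∑ k ∈ range (n + 1), Real.exp 1 ^ k / (Nat.factorial k) :=
        Finset.sum_le_sum h3
    _ ≤ Real.exp (Real.exp 1) := Real.sum_le_exp_of_nonneg (Real.exp_pos 1).le (n + 1)
    _ ≤ Real.exp 3 := Real.exp_le_exp.mpr exp_one_le_three
    _ ≤ 21 := by
        rw [show (3:ℝ) = (3:ℕ) by norm_num, ← Real.exp_one_pow]
        calc Real.exp 1 ^ 3 ≤ 2.7182818286 ^ 3 :=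
              pow_le_pow_left₀ (Real.exp_pos 1).le Real.exp_one_lt_d9.le 3
          _ ≤ 21 := by norm_num

end counting

section graph

variable {V E : Type*} [Fintype V] [Fintype E]
set_option linter.unusedSectionVars false

/-- The set of edges crossing a cut, as a `Finset`. -/
def crossF (ends : E → Sym2 V) (s : Setoid V) : Finset E :=
  univ.filter (Crosses ends s)

lemma cutSize_eq (ends : E → Sym2 V) (s : Setoid V) :
    cutSize ends s = (crossF ends s).card := by
  rw [cutSize, Nat.card_eq_fintype_card, crossF]
  exact Fintype.card_subtype _

lemma crossF_mono (ends : E → Sym2 V) {π s : Setoid V} (h : ∀ x y, π x y → s x y) :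
    crossF ends s ⊆ crossF ends π := by
  intro e he
  simp only [crossF, mem_filter, mem_univ, true_and] at *
  obtain ⟨u, v, he1, he2⟩ := he
  exact ⟨u, v, he1, fun hc => he2 (h u v hc)⟩

/-- Merging the classes of `a` and `b` in the partition `π`. -/
def merge (π : Setoid V) (a b : V) : Setoid V where
  r u v := π u v ∨ (π u a ∧ π b v) ∨ (π u b ∧ π a v)
  iseqv := by
    constructor
    · intro u; exact Or.inl (π.iseqv.refl u)
    · rintro u v (h | ⟨h1, h2⟩ | ⟨h1, h2⟩)
      · exact Or.inl (π.iseqv.symm h)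
      · exact Or.inr (Or.inr ⟨π.iseqv.symm h2, π.iseqv.symm h1⟩)
      · exact Or.inr (Or.inl ⟨π.iseqv.symm h2, π.iseqv.symm h1⟩)
    · rintro u v w (h | ⟨h1, h2⟩ | ⟨h1, h2⟩) (h' | ⟨h1', h2'⟩ | ⟨h1', h2'⟩)
      · exact Or.inl (π.iseqv.trans h h')
      · exact Or.inr (Or.inl ⟨π.iseqv.trans h h1', h2'⟩)
      · exact Or.inr (Or.inr ⟨π.iseqv.trans h h1', h2'⟩)
      · exact Or.inr (Or.inl ⟨h1, π.iseqv.trans h2 h'⟩)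
      · exact Or.inl (π.iseqv.trans (π.iseqv.trans h1 (π.iseqv.symm (π.iseqv.trans h2 h1'))) h2')
      · exact Or.inl (π.iseqv.trans h1 h2')
      · exact Or.inr (Or.inr ⟨h1, π.iseqv.trans h2 h'⟩)
      · exact Or.inl (π.iseqv.trans h1 h2')
      · exact Or.inl (π.iseqv.trans (π.iseqv.trans h1 (π.iseqv.symm (π.iseqv.trans h2 h1'))) h2')

lemma le_merge (π : Setoid V) (a b : V) : ∀ x y, π x y → merge π a b x y :=
  fun _ _ h => Or.inl h

lemma merge_rel (π : Setoid V) (a b : V) : merge π a b a b :=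
  Or.inr (Or.inl ⟨π.iseqv.refl a, π.iseqv.refl b⟩)

lemma card_quotient_merge (π : Setoid V) {a b : V} (hab : ¬ π a b) :
    Nat.card (Quotient (merge π a b)) + 1 = Nat.card (Quotient π) := by
  classical
  have hGne : ∀ v : V,
      (if π v b then Quotient.mk π a else Quotient.mk π v) ≠ Quotient.mk π b := by
    intro v
    by_cases h : π v b
    · rw [if_pos h]
      intro hc
      exact hab (Quotient.eq.mp hc)
    · rw [if_neg h]
      intro hc
      exact h (Quotient.eq.mp hc)
  have hGwd : ∀ u v : V, merge π a b u v →
      (if π u b then Quotient.mk π a else Quotient.mk π u)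
        = (if π v b then Quotient.mk π a else Quotient.mk π v) := by
    rintro u v (h | ⟨h1, h2⟩ | ⟨h1, h2⟩)
    · by_cases hub : π u b
      · rw [if_pos hub, if_pos (π.iseqv.trans (π.iseqv.symm h) hub)]
      · rw [if_neg hub, if_neg (fun hvb => hub (π.iseqv.trans h hvb))]
        exact Quotient.sound h
    · have hub : ¬ π u b := fun hc => hab (π.iseqv.trans (π.iseqv.symm h1) hc)
      have hvb : π v b := π.iseqv.symm h2
      rw [if_neg hub, if_pos hvb]
      exact Quotient.sound h1
    · have hvb : ¬ π v b := fun hc => hab (π.iseqv.trans h2 hc)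
      rw [if_pos h1, if_neg hvb]
      exact Quotient.sound h2
  let G : Quotient (merge π a b) → {z : Quotient π // z ≠ Quotient.mk π b} :=
    Quotient.lift (fun v => (⟨if π v b then Quotient.mk π a else Quotient.mk π v,
      hGne v⟩ : {z : Quotient π // z ≠ Quotient.mk π b}))
      (fun u v h => Subtype.ext (hGwd u v h))
  let H : Quotient π → Quotient (merge π a b) :=
    Quotient.lift (fun v => Quotient.mk (merge π a b) v)
      (fun u v h => Quotient.sound (Or.inl h))
  have e : Quotient (merge π a b) ≃ {z : Quotient π // z ≠ Quotient.mk π b} := by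
    refine ⟨G, fun z => H z.1, ?_, ?_⟩
    · intro q
      induction q using Quotient.inductionOn with
      | h v =>
        by_cases h : π v b
        · show H (if π v b then Quotient.mk π a else Quotient.mk π v) = _
          rw [if_pos h]
          exact Quotient.sound (Or.inr (Or.inl ⟨π.iseqv.refl a, π.iseqv.symm h⟩))
        · show H (if π v b then Quotient.mk π a else Quotient.mk π v) = _
          rw [if_neg h]
          rfl
    · rintro ⟨z, hz⟩
      induction z using Quotient.inductionOn with
      | h v =>
        have hvb : ¬ π v b := fun hc => hz (Quotient.sound hc)
        apply Subtype.ext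
        show (if π v b then Quotient.mk π a else Quotient.mk π v) = _
        rw [if_neg hvb]
  rw [Nat.card_congr e]
  letI : Fintype (Quotient π) := Fintype.ofFinite _
  haveI : Nonempty (Quotient π) := ⟨Quotient.mk π b⟩
  rw [Nat.card_eq_fintype_card, Nat.card_eq_fintype_card]
  have h1 : Fintype.card {z : Quotient π // ¬ (z = Quotient.mk π b)}
      = Fintype.card (Quotient π) - Fintype.card {z : Quotient π // z = Quotient.mk π b} :=
    Fintype.card_subtype_compl _
  have h2 : Fintype.card {z : Quotient π // z = Quotient.mk π b} = 1 :=
    Fintype.card_subtype_eq _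
  have h3 : 0 < Fintype.card (Quotient π) := Fintype.card_pos
  have h4 : Fintype.card {z : Quotient π // z ≠ Quotient.mk π b}
      = Fintype.card {z : Quotient π // ¬ (z = Quotient.mk π b)} := rfl
  omega

lemma degree_bound (ends : E → Sym2 V) (χ : ℕ) (π : Setoid V)
    (hmin : ∀ A : Set V, A.Nonempty → Aᶜ.Nonempty → χ ≤ twoWaySize ends A)
    (h2 : 2 ≤ Nat.card (Quotient π)) :
    Nat.card (Quotient π) * χ ≤ 2 * (crossF ends π).card := by
  classical
  letI : Fintype (Quotient π) := Fintype.ofFinite _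
  rw [Nat.card_eq_fintype_card] at h2 ⊢
  set P : Quotient π → E → Prop :=
    fun z e => ∃ u v : V, ends e = s(u, v) ∧ Quotient.mk π u = z ∧ Quotient.mk π v ≠ z
    with hP
  have step1 : ∀ z : Quotient π, χ ≤ (univ.filter (P z)).card := by
    intro z
    obtain ⟨w, hw⟩ := Quotient.exists_rep z
    have hA : ({v : V | Quotient.mk π v = z} : Set V).Nonempty := ⟨w, hw⟩
    have hAc : ({v : V | Quotient.mk π v = z} : Set V)ᶜ.Nonempty := by
      obtain ⟨z', hz'⟩ := Fintype.exists_ne_of_one_lt_card (by omega) z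
      obtain ⟨w', hw'⟩ := Quotient.exists_rep z'
      exact ⟨w', by simp only [Set.mem_compl_iff, Set.mem_setOf_eq, hw']; exact hz'⟩
    have := hmin _ hA hAc
    rwa [twoWaySize, Nat.card_eq_fintype_card, Fintype.card_subtype] at this
  have step2 : ∀ e : E, (univ.filter (fun z => P z e)).card
      = if Crosses ends π e then 2 else 0 := by
    intro e
    by_cases hc : Crosses ends π e
    · rw [if_pos hc]
      obtain ⟨u, v, hend, hnuv⟩ := hc
      have hne : Quotient.mk π u ≠ Quotient.mk π v := fun h => hnuv (Quotient.eq.mp h)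
      have : univ.filter (fun z => P z e) = {Quotient.mk π u, Quotient.mk π v} := by
        ext z
        simp only [mem_filter, mem_univ, true_and, mem_insert, mem_singleton, hP]
        constructor
        · rintro ⟨a, b, hab, ha, hb⟩
          rw [hend] at hab
          rcases Sym2.eq_iff.mp hab.symm with ⟨h1, h2⟩ | ⟨h1, h2⟩
          · subst h1; subst h2; exact Or.inl ha.symm
          · subst h1; subst h2; exact Or.inr ha.symm
        · rintro (rfl | rfl)
          · exact ⟨u, v, hend, rfl, fun h => hne h.symm⟩
          · exact ⟨v, u, by rw [hend, Sym2.eq_swap], rfl, fun h => hne h⟩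
      rw [this]
      rw [Finset.card_insert_of_notMem (by rw [Finset.mem_singleton]; exact hne),
        Finset.card_singleton]
    · rw [if_neg hc]
      rw [Finset.card_eq_zero, Finset.filter_eq_empty_iff]
      intro z _
      rintro ⟨a, b, hab, ha, hb⟩
      exact hc ⟨a, b, hab, fun h => hb ((Quotient.sound (π.iseqv.symm h)).trans ha)⟩
  calc Fintype.card (Quotient π) * χ
      = ∑ _z : Quotient π, χ := by rw [Finset.sum_const, smul_eq_mul, Finset.card_univ]
    _ ≤ ∑ z : Quotient π, (univ.filter (P z)).card := Finset.sum_le_sum (fun z _ => step1 z)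
    _ = ∑ z : Quotient π, ∑ e : E, (if P z e then 1 else 0) := by
        apply Finset.sum_congr rfl
        intro z _
        rw [Finset.card_filter]
    _ = ∑ e : E, ∑ z : Quotient π, (if P z e then 1 else 0) := Finset.sum_comm
    _ = ∑ e : E, (if Crosses ends π e then 2 else 0) := by
        apply Finset.sum_congr rfl
        intro e _
        rw [← Finset.card_filter]
        exact step2 e
    _ = 2 * (crossF ends π).card := by
        rw [crossF, Finset.card_filter, Finset.mul_sum]
        apply Finset.sum_congr rfl
        intro e _
        by_cases hc : Crosses ends π e <;> simp [hc]

/-- The Karger weight of a cut of size `σ`, for contraction levels `c` down to `r+1`. -/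
def wt (χ r c σ : ℕ) : ℝ :=
  ∏ j ∈ Icc (r + 1) c, max 0 (1 - 2 * (σ : ℝ) / ((j : ℝ) * (χ : ℝ)))

lemma wt_nonneg (χ r c σ : ℕ) : 0 ≤ wt χ r c σ :=
  Finset.prod_nonneg (fun j _ => le_max_left 0 _)

lemma wt_base {χ r c σ : ℕ} (h : c ≤ r) : wt χ r c σ = 1 := by
  rw [wt, Finset.Icc_eq_empty (by omega), Finset.prod_empty]

lemma wt_peel {χ r c σ : ℕ} (h : r + 1 ≤ c) :
    wt χ r c σ = wt χ r (c - 1) σ * max 0 (1 - 2 * (σ : ℝ) / ((c : ℝ) * (χ : ℝ))) := by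
  have hc : c - 1 + 1 = c := by omega
  rw [wt, wt, ← hc, Finset.prod_Icc_succ_top (by omega)]
  rw [hc]

/-- The fundamental weighted counting bound. -/
lemma key (ends : E → Sym2 V) [Nonempty V] (χ : ℕ) (hχ1 : 1 ≤ χ)
    (hmin : ∀ A : Set V, A.Nonempty → Aᶜ.Nonempty → χ ≤ twoWaySize ends A)
    (r : ℕ) (hr : 2 ≤ r) :
    ∀ c (π : Setoid V), Nat.card (Quotient π) = c →
      ∑ s ∈ (univ : Finset (Setoid V)).filter (fun s => ∀ x y : V, π x y → s x y),
        wt χ r c ((crossF ends s).card) ≤ B r := by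
  intro c
  induction c using Nat.strong_induction_on with
  | _ c IH =>
    intro π hπ
    have hc1 : 1 ≤ c := by
      rw [← hπ]
      haveI : Nonempty (Quotient π) := Nonempty.map (Quotient.mk π) inferInstance
      exact Nat.card_pos
    by_cases hbase : c ≤ r
    · -- base case: all weights are 1, count setoids
      have hwt : ∀ s : Setoid V, wt χ r c ((crossF ends s).card) = 1 :=
        fun s => wt_base hbase
      have hsum : ∑ s ∈ (univ : Finset (Setoid V)).filter
            (fun s => ∀ x y : V, π x y → s x y),
          wt χ r c ((crossF ends s).card)
          = (((univ : Finset (Setoid V)).filter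
              (fun s => ∀ x y : V, π x y → s x y)).card : ℝ) := by
        rw [Finset.card_eq_sum_ones]
        push_cast
        exact Finset.sum_congr rfl (fun s _ => hwt s)
      rw [hsum]
      -- inject coarser setoids into setoids of the quotient
      have hinj : (((univ : Finset (Setoid V)).filter
            (fun s => ∀ x y : V, π x y → s x y)).card : ℝ)
          ≤ (Fintype.card (Setoid (Quotient π)) : ℝ) := by
        have : (((univ : Finset (Setoid V)).filter
              (fun s => ∀ x y : V, π x y → s x y)).card : ℕ)
            ≤ Fintype.card (Setoid (Quotient π)) := by
          rw [← Finset.card_univ]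
          apply Finset.card_le_card_of_injOn
            (fun s => (⟨fun z w => s z.out w.out,
              ⟨fun z => s.iseqv.refl _, fun h => s.iseqv.symm h,
                fun h h' => s.iseqv.trans h h'⟩⟩ : Setoid (Quotient π)))
          · intro s _
            exact mem_univ _
          · intro s1 hs1 s2 hs2 heq
            simp only [mem_coe, mem_filter, mem_univ, true_and] at hs1 hs2
            have hout : ∀ (s : Setoid V), (∀ x y : V, π x y → s x y) →
                ∀ u v : V, (s u v ↔ s (Quotient.mk π u).out (Quotient.mk π v).out) := by
              intro s hs u v
              have h1 : s (Quotient.mk π u).out u := hs _ _ (Quotient.mk_out u)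
              have h2 : s (Quotient.mk π v).out v := hs _ _ (Quotient.mk_out v)
              constructor
              · intro h
                exact s.iseqv.trans h1 (s.iseqv.trans h (s.iseqv.symm h2))
              · intro h
                exact s.iseqv.trans (s.iseqv.symm h1) (s.iseqv.trans h h2)
            ext u v
            rw [hout s1 hs1 u v, hout s2 hs2 u v]
            have := congrArg (fun t : Setoid (Quotient π) =>
              t.r (Quotient.mk π u) (Quotient.mk π v)) heq
            exact iff_of_eq this
        exact_mod_cast this
      refine hinj.trans ?_
      have hQne : Nonempty (Quotient π) := Nonempty.map (Quotient.mk π) inferInstance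
      have hcard : Fintype.card (Quotient π) = c := by
        rw [← Nat.card_eq_fintype_card]; exact hπ
      refine (card_setoid_le_B (Quotient π)).trans ?_
      rw [hcard]
      exact B_mono hc1 hbase
    · -- inductive step
      push_neg at hbase
      set m : ℕ := (crossF ends π).card with hm
      have hdeg : c * χ ≤ 2 * m := by
        rw [hm, ← hπ]
        exact degree_bound ends χ π hmin (by omega)
      have hmpos : 0 < m := by nlinarith
      set F := (univ : Finset (Setoid V)).filter (fun s => ∀ x y : V, π x y → s x y)
        with hF
      have per_s : ∀ s ∈ F, wt χ r c ((crossF ends s).card)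
          ≤ ∑ e ∈ crossF ends π, (if e ∉ crossF ends s
              then wt χ r (c - 1) ((crossF ends s).card) / m else 0) := by
        intro s hs
        simp only [hF, mem_filter, mem_univ, true_and] at hs
        have hsub : crossF ends s ⊆ crossF ends π := crossF_mono ends hs
        have hσm : (crossF ends s).card ≤ m := Finset.card_le_card hsub
        rw [Finset.sum_ite, Finset.sum_const_zero, add_zero, Finset.sum_const,
          nsmul_eq_mul]
        have hfilt : (crossF ends π).filter (fun e => e ∉ crossF ends s)
            = crossF ends π \ crossF ends s := (Finset.sdiff_eq_filter _ _).symm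
        rw [hfilt, Finset.card_sdiff_of_subset hsub, wt_peel (show r + 1 ≤ c by omega)]
        set σ := (crossF ends s).card with hσ
        have hwt0 : (0:ℝ) ≤ wt χ r (c-1) σ := wt_nonneg _ _ _ _
        have hmR : (0:ℝ) < (m : ℝ) := by exact_mod_cast hmpos
        have hcχ : (0:ℝ) < (c : ℝ) * (χ : ℝ) := by
          have h0 : 0 < c * χ := by positivity
          exact_mod_cast h0
        have hmr : ((m - σ : ℕ) : ℝ) = (m : ℝ) - (σ:ℝ) := by
          push_cast [Nat.cast_sub hσm]; ring
        have hσR : (0:ℝ) ≤ (σ : ℝ) := Nat.cast_nonneg σ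
        have hσmR : (σ:ℝ) ≤ (m:ℝ) := by exact_mod_cast hσm
        have hdegR : (c:ℝ) * (χ:ℝ) ≤ 2 * (m:ℝ) := by exact_mod_cast hdeg
        have hclip : max 0 (1 - 2 * (σ:ℝ) / ((c:ℝ) * (χ:ℝ)))
            ≤ ((m - σ : ℕ) : ℝ) / (m : ℝ) := by
          rw [hmr]
          apply max_le
          · apply div_nonneg (by linarith) hmR.le
          · have hdd : (σ:ℝ)/(m:ℝ) ≤ 2 * (σ:ℝ) / ((c:ℝ)*(χ:ℝ)) := by
              rw [div_le_div_iff₀ hmR hcχ]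
              nlinarith
            have heq : ((m:ℝ) - σ)/(m:ℝ) = 1 - (σ:ℝ)/(m:ℝ) := by
              field_simp
            rw [heq]
            linarith
        calc wt χ r (c-1) σ * max 0 (1 - 2 * (σ:ℝ) / ((c:ℝ) * (χ:ℝ)))
            ≤ wt χ r (c-1) σ * (((m - σ : ℕ) : ℝ) / (m : ℝ)) :=
              mul_le_mul_of_nonneg_left hclip hwt0
          _ = ((m - σ : ℕ) : ℝ) * (wt χ r (c-1) σ / (m:ℝ)) := by ring
      have inner_e : ∀ e ∈ crossF ends π,
          (∑ s ∈ F, if e ∉ crossF ends s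
            then wt χ r (c-1) ((crossF ends s).card) / m else 0) ≤ B r / m := by
        intro e he
        have hmR : (0:ℝ) < (m : ℝ) := by exact_mod_cast hmpos
        simp only [crossF, mem_filter, mem_univ, true_and] at he
        obtain ⟨a, b, hab, hnab⟩ := he
        have hcard : Nat.card (Quotient (merge π a b)) = c - 1 := by
          have := card_quotient_merge π hnab
          omega
        have hIH := IH (c-1) (by omega) (merge π a b) hcard
        rw [Finset.sum_ite, Finset.sum_const_zero, add_zero, ← Finset.sum_div]
        have hnum : ∑ s ∈ F.filter (fun s => e ∉ crossF ends s),
            wt χ r (c-1) ((crossF ends s).card) ≤ B r := by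
          refine (Finset.sum_le_sum_of_subset_of_nonneg ?_ ?_).trans hIH
          · intro t ht
            simp only [hF, mem_filter, mem_univ, true_and] at ht ⊢
            obtain ⟨hts, hecross⟩ := ht
            intro x y hxy
            have hsab : t a b := by
              by_contra hns
              exact hecross (by
                simp only [crossF, mem_filter, mem_univ, true_and]
                exact ⟨a, b, hab, hns⟩)
            rcases hxy with h | ⟨h1, h2⟩ | ⟨h1, h2⟩
            · exact hts x y h
            · exact t.iseqv.trans (hts _ _ h1) (t.iseqv.trans hsab (hts _ _ h2))
            · exact t.iseqv.trans (hts _ _ h1)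
                (t.iseqv.trans (t.iseqv.symm hsab) (hts _ _ h2))
          · intro t _ _
            exact wt_nonneg _ _ _ _
        gcongr
      calc ∑ s ∈ F, wt χ r c ((crossF ends s).card)
          ≤ ∑ s ∈ F, ∑ e ∈ crossF ends π, (if e ∉ crossF ends s
              then wt χ r (c-1) ((crossF ends s).card) / m else 0) :=
            Finset.sum_le_sum per_s
        _ = ∑ e ∈ crossF ends π, ∑ s ∈ F, (if e ∉ crossF ends s
              then wt χ r (c-1) ((crossF ends s).card) / m else 0) := Finset.sum_comm
        _ ≤ ∑ e ∈ crossF ends π, B r / m := Finset.sum_le_sum inner_e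
        _ = B r := by
            rw [Finset.sum_const, nsmul_eq_mul, ← hm]
            field_simp

end graph

section interp

lemma prod_Icc_sub_r (r : ℕ) : ∀ n, r ≤ n →
    ∏ j ∈ Icc (r + 1) n, (j - r) = Nat.factorial (n - r) := by
  intro n
  induction n with
  | zero =>
    intro h
    have h0 : r = 0 := by omega
    subst h0
    simp
  | succ n ih =>
    intro h
    rcases Nat.eq_or_lt_of_le h with h1 | h2
    · rw [← h1]
      rw [Finset.Icc_eq_empty (by omega), Finset.prod_empty, Nat.sub_self]
      rfl
    · have hrn : r ≤ n := by omega
      rw [Finset.prod_Icc_succ_top (by omega), ih hrn,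
        show n + 1 - r = (n - r) + 1 by omega, Nat.factorial_succ]
      exact Nat.mul_comm _ _

lemma prod_Icc_sub_r1 (r : ℕ) : ∀ n, r ≤ n →
    ∏ j ∈ Icc (r + 1) n, (j - r + 1) = Nat.factorial (n - r + 1) := by
  intro n
  induction n with
  | zero =>
    intro h
    have h0 : r = 0 := by omega
    subst h0
    simp
  | succ n ih =>
    intro h
    rcases Nat.eq_or_lt_of_le h with h1 | h2
    · rw [← h1]
      rw [Finset.Icc_eq_empty (by omega), Finset.prod_empty, Nat.sub_self]
      rfl
    · have hrn : r ≤ n := by omega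
      rw [Finset.prod_Icc_succ_top (by omega), ih hrn,
        show n + 1 - r + 1 = (n - r + 1) + 1 by omega, Nat.factorial_succ]
      exact Nat.mul_comm _ _

lemma prod_Icc_id_fac (r : ℕ) : ∀ n, r ≤ n →
    Nat.factorial r * ∏ j ∈ Icc (r + 1) n, j = Nat.factorial n := by
  intro n
  induction n with
  | zero =>
    intro h
    have h0 : r = 0 := by omega
    subst h0
    simp
  | succ n ih =>
    intro h
    rcases Nat.eq_or_lt_of_le h with h1 | h2
    · rw [← h1]
      rw [Finset.Icc_eq_empty (by omega), Finset.prod_empty, Nat.mul_one]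
    · have hrn : r ≤ n := by omega
      rw [Finset.prod_Icc_succ_top (by omega), ← Nat.mul_assoc, ih hrn,
        Nat.factorial_succ, Nat.mul_comm]

lemma interp (n r : ℕ) (x : ℝ) (hr : 2 ≤ r) (hrn : r ≤ n)
    (hx1 : (r : ℝ) - 1 ≤ x) (hx2 : x ≤ (r : ℝ)) :
    (Nat.factorial r : ℝ) * (n : ℝ) ^ (-x) ≤ ∏ j ∈ Icc (r + 1) n, (1 - x / (j : ℝ)) := by
  set t : ℝ := x - ((r : ℝ) - 1) with ht
  have ht0 : 0 ≤ t := by simp only [ht]; linarith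
  have ht1 : t ≤ 1 := by simp only [ht]; linarith
  have hx0 : 0 ≤ x := by
    have : (2:ℝ) ≤ (r:ℝ) := by exact_mod_cast hr
    linarith
  have hnR : (0:ℝ) < (n : ℝ) := by
    have : 0 < n := by omega
    exact_mod_cast this
  -- rewrite factors
  have hfac : ∀ j ∈ Icc (r + 1) n, (1 - x / (j:ℝ)) = ((j:ℝ) - x) / (j:ℝ) := by
    intro j hj
    have hj1 : r + 1 ≤ j := (mem_Icc.mp hj).1
    have hjR : (0:ℝ) < (j:ℝ) := by
      have : 0 < j := by omega
      exact_mod_cast this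
    field_simp
  rw [Finset.prod_congr rfl hfac, Finset.prod_div_distrib]
  -- lower bound numerator
  have hnum : ((Nat.factorial (n - r) : ℝ)) ^ t * ((Nat.factorial (n - r + 1) : ℝ)) ^ (1 - t)
      ≤ ∏ j ∈ Icc (r + 1) n, ((j:ℝ) - x) := by
    have hstep : ∀ j ∈ Icc (r + 1) n,
        ((j:ℝ) - r) ^ t * ((j:ℝ) - r + 1) ^ (1 - t) ≤ (j:ℝ) - x := by
      intro j hj
      have hj1 : r + 1 ≤ j := (mem_Icc.mp hj).1
      have hjr : (1:ℝ) ≤ (j:ℝ) - r := by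
        have : (r:ℝ) + 1 ≤ (j:ℝ) := by exact_mod_cast hj1
        linarith
      have := Real.geom_mean_le_arith_mean2_weighted ht0 (by linarith : (0:ℝ) ≤ 1 - t)
        (by linarith : (0:ℝ) ≤ (j:ℝ) - r) (by linarith : (0:ℝ) ≤ (j:ℝ) - r + 1)
        (by ring)
      calc ((j:ℝ) - r) ^ t * ((j:ℝ) - r + 1) ^ (1 - t)
          ≤ t * ((j:ℝ) - r) + (1 - t) * ((j:ℝ) - r + 1) := this
        _ = (j:ℝ) - x := by simp only [ht]; ring
    calc ((Nat.factorial (n - r) : ℝ)) ^ t * ((Nat.factorial (n - r + 1) : ℝ)) ^ (1 - t)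
        = (∏ j ∈ Icc (r + 1) n, ((j:ℝ) - r)) ^ t
          * (∏ j ∈ Icc (r + 1) n, ((j:ℝ) - r + 1)) ^ (1 - t) := by
          congr 1
          · congr 1
            rw [← prod_Icc_sub_r r n hrn, Nat.cast_prod]
            exact Finset.prod_congr rfl (fun j hj => by
              have hj1 : r + 1 ≤ j := (mem_Icc.mp hj).1
              push_cast [Nat.cast_sub (show r ≤ j by omega)]
              ring)
          · congr 1
            rw [← prod_Icc_sub_r1 r n hrn, Nat.cast_prod]
            exact Finset.prod_congr rfl (fun j hj => by
              have hj1 : r + 1 ≤ j := (mem_Icc.mp hj).1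
              push_cast [Nat.cast_sub (show r ≤ j by omega)]
              ring)
      _ = ∏ j ∈ Icc (r + 1) n, (((j:ℝ) - r) ^ t * ((j:ℝ) - r + 1) ^ (1 - t)) := by
          rw [← Real.finset_prod_rpow _ _ (fun j hj => by
              have hj1 : r + 1 ≤ j := (mem_Icc.mp hj).1
              have : (r:ℝ) + 1 ≤ (j:ℝ) := by exact_mod_cast hj1
              linarith) t,
            ← Real.finset_prod_rpow _ _ (fun j hj => by
              have hj1 : r + 1 ≤ j := (mem_Icc.mp hj).1
              have : (r:ℝ) + 1 ≤ (j:ℝ) := by exact_mod_cast hj1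
              linarith) (1 - t),
            ← Finset.prod_mul_distrib]
      _ ≤ ∏ j ∈ Icc (r + 1) n, ((j:ℝ) - x) := by
          apply Finset.prod_le_prod
          · intro j hj
            apply mul_nonneg <;> apply Real.rpow_nonneg
            · have hj1 : r + 1 ≤ j := (mem_Icc.mp hj).1
              have : (r:ℝ) + 1 ≤ (j:ℝ) := by exact_mod_cast hj1
              linarith
            · have hj1 : r + 1 ≤ j := (mem_Icc.mp hj).1
              have : (r:ℝ) + 1 ≤ (j:ℝ) := by exact_mod_cast hj1
              linarith
          · exact hstep
  -- denominator
  have hDpos : (0:ℝ) < ∏ j ∈ Icc (r + 1) n, (j : ℝ) := by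
    apply Finset.prod_pos
    intro j hj
    have hj1 : r + 1 ≤ j := (mem_Icc.mp hj).1
    have : 0 < j := by omega
    exact_mod_cast this
  rw [le_div_iff₀ hDpos]
  have hden : (Nat.factorial r : ℝ) * ∏ j ∈ Icc (r + 1) n, (j : ℝ)
      = (Nat.factorial n : ℝ) := by
    rw [← Nat.cast_prod, ← Nat.cast_mul, prod_Icc_id_fac r n hrn]
  have hNF : (0:ℝ) < (Nat.factorial n : ℝ) := by
    exact_mod_cast Nat.factorial_pos n
  have hcomp : (Nat.factorial n : ℝ) * (n:ℝ) ^ (-x)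
      ≤ ((Nat.factorial (n - r) : ℝ)) ^ t * ((Nat.factorial (n - r + 1) : ℝ)) ^ (1 - t) := by
    have h1 : (Nat.factorial n : ℝ)
        ≤ (n:ℝ) ^ ((r:ℕ):ℝ) * (Nat.factorial (n - r) : ℝ) := by
      rw [Real.rpow_natCast]
      have hn1 := Nat.factorial_mul_descFactorial hrn
      have hn2 := Nat.descFactorial_le_pow n r
      calc (Nat.factorial n : ℝ)
          = (Nat.factorial (n - r) : ℝ) * (n.descFactorial r : ℝ) := by
            rw [← Nat.cast_mul, hn1]
        _ ≤ (Nat.factorial (n - r) : ℝ) * ((n:ℝ) ^ r) := by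
            apply mul_le_mul_of_nonneg_left ?_ (Nat.cast_nonneg _)
            exact_mod_cast hn2
        _ = (n:ℝ) ^ r * (Nat.factorial (n - r) : ℝ) := by ring
    have h2 : (Nat.factorial n : ℝ)
        ≤ (n:ℝ) ^ (((r - 1 : ℕ)):ℝ) * (Nat.factorial (n - r + 1) : ℝ) := by
      rw [Real.rpow_natCast]
      have hr1n : r - 1 ≤ n := by omega
      have hn1 := Nat.factorial_mul_descFactorial hr1n
      have hn2 := Nat.descFactorial_le_pow n (r - 1)
      have hnr : n - (r - 1) = n - r + 1 := by omega
      calc (Nat.factorial n : ℝ)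
          = (Nat.factorial (n - r + 1) : ℝ) * (n.descFactorial (r - 1) : ℝ) := by
            rw [← Nat.cast_mul, ← hnr, hn1]
        _ ≤ (Nat.factorial (n - r + 1) : ℝ) * ((n:ℝ) ^ (r - 1)) := by
            apply mul_le_mul_of_nonneg_left ?_ (Nat.cast_nonneg _)
            exact_mod_cast hn2
        _ = (n:ℝ) ^ (r - 1) * (Nat.factorial (n - r + 1) : ℝ) := by ring
    have hF0 : (0:ℝ) ≤ (Nat.factorial (n - r) : ℝ) := Nat.cast_nonneg _
    have hF1 : (0:ℝ) ≤ (Nat.factorial (n - r + 1) : ℝ) := Nat.cast_nonneg _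
    have hrr : ((r:ℕ):ℝ) * t + (((r-1:ℕ)):ℝ) * (1 - t) + -x = 0 := by
      have : (((r-1:ℕ)):ℝ) = (r:ℝ) - 1 := by
        push_cast [Nat.cast_sub (show 1 ≤ r by omega)]
        ring
      rw [this]
      simp only [ht]
      ring
    calc (Nat.factorial n : ℝ) * (n:ℝ) ^ (-x)
        = ((Nat.factorial n : ℝ)) ^ t * ((Nat.factorial n : ℝ)) ^ (1 - t) * (n:ℝ) ^ (-x) := by
          rw [← Real.rpow_add hNF]
          norm_num
      _ ≤ ((n:ℝ) ^ ((r:ℕ):ℝ) * (Nat.factorial (n - r) : ℝ)) ^ t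
            * ((n:ℝ) ^ (((r-1:ℕ)):ℝ) * (Nat.factorial (n - r + 1) : ℝ)) ^ (1 - t)
            * (n:ℝ) ^ (-x) := by
          apply mul_le_mul_of_nonneg_right ?_ (Real.rpow_nonneg hnR.le _)
          apply mul_le_mul
          · exact Real.rpow_le_rpow hNF.le h1 ht0
          · exact Real.rpow_le_rpow hNF.le h2 (by linarith)
          · exact Real.rpow_nonneg hNF.le _
          · exact Real.rpow_nonneg (by positivity) _
      _ = ((Nat.factorial (n - r) : ℝ)) ^ t * ((Nat.factorial (n - r + 1) : ℝ)) ^ (1 - t)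
            * ((n:ℝ) ^ (((r:ℕ):ℝ) * t) * (n:ℝ) ^ ((((r-1:ℕ)):ℝ) * (1 - t)) * (n:ℝ) ^ (-x)) := by
          rw [Real.mul_rpow (Real.rpow_nonneg hnR.le _) hF0,
            Real.mul_rpow (Real.rpow_nonneg hnR.le _) hF1,
            ← Real.rpow_mul hnR.le, ← Real.rpow_mul hnR.le]
          ring
      _ = ((Nat.factorial (n - r) : ℝ)) ^ t * ((Nat.factorial (n - r + 1) : ℝ)) ^ (1 - t) := by
          rw [← Real.rpow_add hnR, ← Real.rpow_add hnR, hrr, Real.rpow_zero, mul_one]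
  calc (Nat.factorial r : ℝ) * (n:ℝ) ^ (-x) * ∏ j ∈ Icc (r + 1) n, (j : ℝ)
      = (Nat.factorial n : ℝ) * (n:ℝ) ^ (-x) := by
        rw [← hden]; ring
    _ ≤ ((Nat.factorial (n - r) : ℝ)) ^ t * ((Nat.factorial (n - r + 1) : ℝ)) ^ (1 - t) :=
        hcomp
    _ ≤ ∏ j ∈ Icc (r + 1) n, ((j:ℝ) - x) := hnum

end interp

section master

variable {V E : Type*} [Fintype V] [Fintype E]

/-- The equality setoid. -/
def botS (V : Type*) : Setoid V :=
  ⟨Eq, ⟨fun _ => rfl, fun h => h.symm, fun h h' => h.trans h'⟩⟩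

lemma card_quotient_botS : Nat.card (Quotient (botS V)) = Fintype.card V := by
  have e : Quotient (botS V) ≃ V := by
    refine ⟨Quotient.lift id (fun a b h => h), Quotient.mk (botS V), ?_, ?_⟩
    · intro q
      induction q using Quotient.inductionOn with
      | h v => rfl
    · intro v
      rfl
  rw [Nat.card_congr e, Nat.card_eq_fintype_card]

lemma master (ends : E → Sym2 V)
    (n χ : ℕ) (hn : Fintype.card V = n) (hn2 : 2 ≤ n) (hχ1 : 1 ≤ χ)
    (hmin : ∀ A : Set V, A.Nonempty → Aᶜ.Nonempty → χ ≤ twoWaySize ends A)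
    (p η α : ℝ) (hp0 : 0 < p)
    (hη : p ^ χ = (n : ℝ) ^ (-(2 + η))) (hηpos : 0 < η) (hα : 1 ≤ α) :
    ∑ s ∈ (univ : Finset (Setoid V)).filter
        (fun s => α * (χ:ℝ) ≤ ((crossF ends s).card : ℝ)),
      p ^ ((crossF ends s).card)
      ≤ 49 * (n : ℝ) ^ (-(α * η)) := by
  haveI : Nonempty V := Fintype.card_pos_iff.mp (by omega)
  have hnR1 : (1:ℝ) ≤ (n:ℝ) := by exact_mod_cast (by omega : 1 ≤ n)
  have hnR0 : (0:ℝ) < (n:ℝ) := by linarith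
  have hχR : (0:ℝ) < (χ:ℝ) := by exact_mod_cast hχ1
  set K : ℝ := (n:ℝ) ^ (-(α * η)) with hK
  have hK0 : (0:ℝ) ≤ K := Real.rpow_nonneg hnR0.le _
  have hps : ∀ σ : ℕ, p ^ σ = (n:ℝ) ^ (-(2 + η) * ((σ:ℝ) / (χ:ℝ))) := by
    intro σ
    have h1 : p ^ σ = (p ^ ((χ:ℕ):ℝ)) ^ ((σ:ℝ)/(χ:ℝ)) := by
      rw [← Real.rpow_mul hp0.le, ← Real.rpow_natCast p σ]
      congr 1
      field_simp
    rw [h1, Real.rpow_natCast, hη, ← Real.rpow_mul hnR0.le]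
  set T : Finset (Setoid V) := (univ : Finset (Setoid V)).filter
    (fun s => α * (χ:ℝ) ≤ ((crossF ends s).card : ℝ)) with hT
  set T1 : Finset (Setoid V) := T.filter
    (fun s => 2 * (crossF ends s).card ≤ n * χ) with hT1
  set T2 : Finset (Setoid V) := T.filter
    (fun s => ¬ (2 * (crossF ends s).card ≤ n * χ)) with hT2
  have hsplit : ∑ s ∈ T1, p ^ ((crossF ends s).card)
      + ∑ s ∈ T2, p ^ ((crossF ends s).card)
      = ∑ s ∈ T, p ^ ((crossF ends s).card) :=
    Finset.sum_filter_add_sum_filter_not T _ _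
  -- exponent split helper
  have hexp : ∀ s ∈ T, p ^ ((crossF ends s).card)
      = (n:ℝ) ^ (-(2 * ((crossF ends s).card:ℝ) / (χ:ℝ)))
        * (n:ℝ) ^ (-(η * (((crossF ends s).card:ℝ) / (χ:ℝ)))) := by
    intro s _
    rw [hps, ← Real.rpow_add hnR0]
    congr 1
    ring
  have hmono2 : ∀ s ∈ T,
      (n:ℝ) ^ (-(η * (((crossF ends s).card:ℝ) / (χ:ℝ)))) ≤ K := by
    intro s hs
    simp only [hT, mem_filter, mem_univ, true_and] at hs
    apply Real.rpow_le_rpow_of_exponent_le hnR1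
    have hdiv : α ≤ ((crossF ends s).card:ℝ) / (χ:ℝ) := by
      rw [le_div_iff₀ hχR]
      exact hs
    nlinarith
  -- Part T1
  have hT1bound : ∑ s ∈ T1, p ^ ((crossF ends s).card) ≤ 21 * K := by
    set rs : Setoid V → ℕ :=
      fun s => ⌈2 * (((crossF ends s).card:ℝ)) / (χ:ℝ)⌉₊ with hrs
    have hfacts : ∀ s ∈ T1, 2 ≤ rs s ∧ rs s ≤ n := by
      intro s hs
      simp only [hT1, hT, mem_filter, mem_univ, true_and] at hs
      obtain ⟨hαχ, h2σ⟩ := hs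
      set σ : ℕ := (crossF ends s).card with hσdef
      have hx2 : (2:ℝ) ≤ 2 * (σ:ℝ) / (χ:ℝ) := by
        rw [le_div_iff₀ hχR]
        nlinarith
      have hxn : 2 * (σ:ℝ) / (χ:ℝ) ≤ (n:ℝ) := by
        rw [div_le_iff₀ hχR]
        exact_mod_cast h2σ
      constructor
      · have h1 : (1:ℕ) < rs s := Nat.lt_ceil.mpr (by push_cast; linarith)
        omega
      · exact Nat.ceil_le.mpr hxn
    have hterm : ∀ s ∈ T1,
        p ^ ((crossF ends s).card)
          ≤ (wt χ (rs s) n ((crossF ends s).card) / (Nat.factorial (rs s))) * K := by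
      intro s hs
      obtain ⟨hr2, hrn⟩ := hfacts s hs
      have hsT : s ∈ T := Finset.mem_of_mem_filter s hs
      simp only [hT1, hT, mem_filter, mem_univ, true_and] at hs
      obtain ⟨hαχ, h2σ⟩ := hs
      set σ : ℕ := (crossF ends s).card with hσdef
      set x : ℝ := 2 * (σ:ℝ) / (χ:ℝ) with hxdef
      have hx2 : (2:ℝ) ≤ x := by
        rw [hxdef, le_div_iff₀ hχR]
        nlinarith
      have hxn : x ≤ (n:ℝ) := by
        rw [hxdef, div_le_iff₀ hχR]
        exact_mod_cast h2σ
      have hxr1 : (rs s : ℝ) - 1 ≤ x := by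
        have := Nat.ceil_lt_add_one (show (0:ℝ) ≤ x by linarith)
        have hceil : (rs s : ℝ) < x + 1 := this
        linarith
      have hxr2 : x ≤ (rs s : ℝ) := Nat.le_ceil x
      have hinterp := interp n (rs s) x hr2 hrn hxr1 hxr2
      have hwt_eq : wt χ (rs s) n σ = ∏ j ∈ Icc (rs s + 1) n, (1 - x / (j:ℝ)) := by
        unfold wt
        apply Finset.prod_congr rfl
        intro j hj
        have hj1 : rs s + 1 ≤ j := (mem_Icc.mp hj).1
        have hjR : (0:ℝ) < (j:ℝ) := by
          have h0 : 0 < j := by omega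
          exact_mod_cast h0
        have hjx : x ≤ (j:ℝ) := by
          have hcast : ((rs s : ℕ):ℝ) + 1 ≤ (j:ℝ) := by exact_mod_cast hj1
          linarith
        have harg : 2 * (σ:ℝ) / ((j:ℝ) * (χ:ℝ)) = x / (j:ℝ) := by
          rw [hxdef, div_div, mul_comm (χ:ℝ) (j:ℝ)]
        have hd1 : x / (j:ℝ) ≤ 1 := by
          rw [div_le_one hjR]
          exact hjx
        rw [harg, max_eq_right (by linarith : (0:ℝ) ≤ 1 - x / (j:ℝ))]
      have hb1 : (n:ℝ) ^ (-x) ≤ wt χ (rs s) n σ / (Nat.factorial (rs s)) := by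
        rw [le_div_iff₀ (by positivity : (0:ℝ) < (Nat.factorial (rs s) : ℝ)), hwt_eq]
        calc (n:ℝ)^(-x) * (Nat.factorial (rs s):ℝ)
            = (Nat.factorial (rs s):ℝ) * (n:ℝ)^(-x) := by ring
          _ ≤ _ := hinterp
      have hb2 := hmono2 s hsT
      calc p ^ σ
          = (n:ℝ) ^ (-(2*(σ:ℝ)/(χ:ℝ))) * (n:ℝ) ^ (-(η * ((σ:ℝ)/(χ:ℝ)))) := hexp s hsT
        _ ≤ (wt χ (rs s) n σ / (Nat.factorial (rs s))) * K := by
            apply mul_le_mul ?_ hb2 (Real.rpow_nonneg hnR0.le _) ?_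
            · exact hb1
            · have hw := wt_nonneg χ (rs s) n σ
              positivity
    have hmaps : ∀ s ∈ T1, rs s ∈ Icc 2 n := by
      intro s hs
      obtain ⟨h1, h2⟩ := hfacts s hs
      exact mem_Icc.mpr ⟨h1, h2⟩
    calc ∑ s ∈ T1, p ^ ((crossF ends s).card)
        ≤ ∑ s ∈ T1, (wt χ (rs s) n ((crossF ends s).card) / (Nat.factorial (rs s))) * K :=
          Finset.sum_le_sum hterm
      _ = (∑ s ∈ T1, wt χ (rs s) n ((crossF ends s).card) / (Nat.factorial (rs s))) * K := by
          rw [Finset.sum_mul]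
      _ ≤ 21 * K := by
          apply mul_le_mul_of_nonneg_right ?_ hK0
          rw [← Finset.sum_fiberwise_of_maps_to hmaps
            (fun s => wt χ (rs s) n ((crossF ends s).card) / (Nat.factorial (rs s)))]
          refine (Finset.sum_le_sum ?_).trans (sumB_le n)
          intro r hr
          have hr2 : 2 ≤ r := (mem_Icc.mp hr).1
          have hinner : ∑ s ∈ T1.filter (fun s => rs s = r),
              wt χ (rs s) n ((crossF ends s).card) / (Nat.factorial (rs s))
              = (∑ s ∈ T1.filter (fun s => rs s = r),
                  wt χ r n ((crossF ends s).card)) / (Nat.factorial r) := by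
            rw [Finset.sum_div]
            apply Finset.sum_congr rfl
            intro s hs
            rw [(Finset.mem_filter.mp hs).2]
          rw [hinner]
          have hnum : ∑ s ∈ T1.filter (fun s => rs s = r),
              wt χ r n ((crossF ends s).card) ≤ B r := by
            have hkey := key ends χ hχ1 hmin r hr2 n (botS V)
              (by rw [card_quotient_botS, hn])
            refine (Finset.sum_le_sum_of_subset_of_nonneg ?_ ?_).trans hkey
            · intro t _
              simp only [mem_filter, mem_univ, true_and]
              intro x y hxy
              exact hxy ▸ t.iseqv.refl x
            · intro t _ _
              exact wt_nonneg _ _ _ _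
          gcongr
  -- Part T2
  have hT2bound : ∑ s ∈ T2, p ^ ((crossF ends s).card) ≤ 3 * K := by
    have hterm2 : ∀ s ∈ T2,
        p ^ ((crossF ends s).card) ≤ (n:ℝ)^(-(n:ℝ)) * K := by
      intro s hs
      have hsT : s ∈ T := Finset.mem_of_mem_filter s hs
      have h2 := hmono2 s hsT
      simp only [hT2, mem_filter] at hs
      have h2σ : n * χ < 2 * (crossF ends s).card := by omega
      have h1 : (n:ℝ) ^ (-(2 * ((crossF ends s).card:ℝ) / (χ:ℝ)))
          ≤ (n:ℝ)^(-(n:ℝ)) := by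
        apply Real.rpow_le_rpow_of_exponent_le hnR1
        have hnx : (n:ℝ) ≤ 2 * ((crossF ends s).card:ℝ) / (χ:ℝ) := by
          rw [le_div_iff₀ hχR]
          exact_mod_cast h2σ.le
        linarith
      rw [hexp s hsT]
      exact mul_le_mul h1 h2 (Real.rpow_nonneg hnR0.le _) (Real.rpow_nonneg hnR0.le _)
    have hpow : ((n:ℝ)^(n:ℕ)) * (n:ℝ)^(-(n:ℝ)) = 1 := by
      rw [← Real.rpow_natCast (n:ℝ) n, ← Real.rpow_add hnR0]
      simp
    have hcardT2 : (T2.card : ℝ) ≤ 3 * (n:ℝ)^(n:ℕ) := by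
      have hle : T2.card ≤ Fintype.card (Setoid V) := by
        rw [← Finset.card_univ]
        exact Finset.card_le_card (Finset.subset_univ T2)
      have := card_setoid_le_pow V
      rw [hn] at this
      calc (T2.card : ℝ) ≤ (Fintype.card (Setoid V) : ℝ) := by exact_mod_cast hle
        _ ≤ 3 * (n:ℝ)^(n:ℕ) := this
    calc ∑ s ∈ T2, p ^ ((crossF ends s).card)
        ≤ ∑ _s ∈ T2, (n:ℝ)^(-(n:ℝ)) * K := Finset.sum_le_sum hterm2
      _ = (T2.card : ℝ) * ((n:ℝ)^(-(n:ℝ)) * K) := by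
          rw [Finset.sum_const, nsmul_eq_mul]
      _ ≤ (3 * (n:ℝ)^(n:ℕ)) * ((n:ℝ)^(-(n:ℝ)) * K) := by
          apply mul_le_mul_of_nonneg_right hcardT2
          have := Real.rpow_nonneg hnR0.le (-(n:ℝ))
          positivity
      _ = 3 * (((n:ℝ)^(n:ℕ)) * (n:ℝ)^(-(n:ℝ))) * K := by ring
      _ = 3 * K := by rw [hpow]; ring
  rw [← hsplit]
  linarith

end master

end

end Karger

/-- **Large compact cuts are unlikely.** Let `G` be a finite connected multigraph on
`n ≥ 2` vertices with minimum (2-way) cut size `χ ≥ 1`, in which each edge independently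
becomes heavy with probability `p ∈ (0,1)`. Writing `p^χ = n^(-(2+η))` with `η > 0`, for
every real `α ≥ 1` the probability that some compact cut of size at least `α·χ` has all
its crossing edges heavy is at most `49 · n^(-αη)`. -/
theorem large_compact_cuts_unlikely {V E : Type*} [Fintype V] [Fintype E]
    {Ω : Type*} [MeasurableSpace Ω] (P : Measure Ω) [IsProbabilityMeasure P]
    (ends : E → Sym2 V) (n : ℕ) (hn : Fintype.card V = n) (hn2 : 2 ≤ n)
    (hconn : ConnectedOn ends Set.univ)
    (χ : ℕ) (hχ1 : 1 ≤ χ)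
    (hχ : IsLeast {k : ℕ | ∃ A : Set V,
      A.Nonempty ∧ Aᶜ.Nonempty ∧ k = twoWaySize ends A} χ)
    (p η : ℝ) (hp0 : 0 < p) (hp1 : p < 1)
    (heavy : E → Ω → Bool)
    (hmeas : ∀ e, Measurable (heavy e))
    (hindep : iIndepFun heavy P)
    (hprob : ∀ e, P {ω | heavy e ω = true} = ENNReal.ofReal p)
    (hη : p ^ χ = (n : ℝ) ^ (-(2 + η)))
    (hηpos : 0 < η)
    (α : ℝ) (hα : 1 ≤ α) :
    P {ω | ∃ s : Setoid V, IsCompactCut ends s ∧ α * χ ≤ (cutSize ends s : ℝ) ∧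
        ∀ e, Crosses ends s e → heavy e ω = true}
      ≤ ENNReal.ofReal (49 * (n : ℝ) ^ (-(α * η))) := by
  classical
  have hmin : ∀ A : Set V, A.Nonempty → Aᶜ.Nonempty → χ ≤ twoWaySize ends A :=
    fun A h1 h2 => hχ.2 ⟨A, h1, h2, rfl⟩
  set T : Finset (Setoid V) := (univ : Finset (Setoid V)).filter
    (fun s => IsCompactCut ends s ∧ α * (χ:ℝ) ≤ ((cutSize ends s : ℕ) : ℝ)) with hTdef
  have hevent : {ω | ∃ s : Setoid V, IsCompactCut ends s ∧ α * χ ≤ (cutSize ends s : ℝ) ∧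
        ∀ e, Crosses ends s e → heavy e ω = true}
      = ⋃ s ∈ T, ⋂ e ∈ Karger.crossF ends s, {ω | heavy e ω = true} := by
    ext ω
    simp only [Set.mem_setOf_eq, Set.mem_iUnion, Set.mem_iInter, hTdef, mem_filter,
      mem_univ, true_and]
    constructor
    · rintro ⟨s, h1, h2, h3⟩
      refine ⟨s, ⟨h1, h2⟩, fun e he => h3 e ?_⟩
      have := (mem_filter.mp he).2
      exact this
    · rintro ⟨s, ⟨h1, h2⟩, h3⟩
      exact ⟨s, h1, h2, fun e hc =>
        h3 e (mem_filter.mpr ⟨mem_univ e, hc⟩)⟩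
  rw [hevent]
  refine (measure_biUnion_finset_le _ _).trans ?_
  have hper : ∀ s ∈ T, P (⋂ e ∈ Karger.crossF ends s, {ω | heavy e ω = true})
      = ENNReal.ofReal (p ^ ((Karger.crossF ends s).card)) := by
    intro s _
    have hm : P (⋂ e ∈ Karger.crossF ends s, {ω | heavy e ω = true})
        = ∏ e ∈ Karger.crossF ends s, P {ω | heavy e ω = true} :=
      hindep.meas_biInter (fun e _ => ⟨{true}, trivial, by ext ω; simp⟩)
    rw [hm, Finset.prod_congr rfl (fun e _ => hprob e), Finset.prod_const,
      ← ENNReal.ofReal_pow hp0.le]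
  calc ∑ s ∈ T, P (⋂ e ∈ Karger.crossF ends s, {ω | heavy e ω = true})
      = ∑ s ∈ T, ENNReal.ofReal (p ^ ((Karger.crossF ends s).card)) :=
        Finset.sum_congr rfl hper
    _ = ENNReal.ofReal (∑ s ∈ T, p ^ ((Karger.crossF ends s).card)) :=
        (ENNReal.ofReal_sum_of_nonneg (fun s _ => by positivity)).symm
    _ ≤ ENNReal.ofReal (49 * (n : ℝ) ^ (-(α * η))) := by
        apply ENNReal.ofReal_le_ofReal
        have hmaster := Karger.master ends n χ hn hn2 hχ1 hmin p η α hp0 hη hηpos hα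
        refine le_trans ?_ hmaster
        apply Finset.sum_le_sum_of_subset_of_nonneg
        · intro s hs
          simp only [hTdef, mem_filter, mem_univ, true_and] at hs ⊢
          rw [← Karger.cutSize_eq]
          exact hs.2
        · intro s _ _
          positivity
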